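/- Let m, κ ∈ ℕ with 1 ≤ κ ≤ m and let r > 0 with r² ≤ 3κ/m. Let α = (α_1, …, α_m) be distributed uniformly on the hypercube [−r, r]^m (product of uniform distributions on [−r, r]), and let d : {1, −1}^m → [−1, 1] be any family of coefficients. Then E[ ( Σ_{ω ∈ {1,−1}^m : #sin(ω) ≥ κ} Φ_ω(α) d_ω )² ] ≤ (e m r² / (3κ))^κ. -/

import Mathlib

open MeasureTheory

/-- The path coefficient `Φ_ω(α) = ∏_i φ_{ω_i}(α_i)` where a `true` entry of `ω` stands for
`ω_i = −1` (a sine factor) and a `false` entry for `ω_i = 1` (a cosine factor). -/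
noncomputable def pathCoeff (m : ℕ) (ω : Fin m → Bool) (α : Fin m → ℝ) : ℝ :=
  ∏ i, if ω i then Real.sin (α i) else Real.cos (α i)

/-- `#sin(ω)`: the number of sine factors (entries `ω_i = −1`, encoded as `true`). -/
def numSin (m : ℕ) (ω : Fin m → Bool) : ℕ :=
  (Finset.univ.filter (fun i => ω i = true)).card

/-- The uniform probability measure on the interval `[−r, r]`. -/
noncomputable def uniformIcc (r : ℝ) : Measure ℝ :=
  (ENNReal.ofReal (2 * r))⁻¹ • volume.restrict (Set.Icc (-r) r)

/- ### Auxiliary combinatorial lemmas -/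

lemma pow_numSin_eq_prod (m : ℕ) (x : ℝ) (ω : Fin m → Bool) :
    x ^ numSin m ω = ∏ i, (if ω i = true then x else 1) := by
  rw [Finset.prod_ite, Finset.prod_const, Finset.prod_const, one_pow, mul_one, numSin]

lemma sum_pow_numSin (m : ℕ) (x : ℝ) :
    ∑ ω : Fin m → Bool, x ^ numSin m ω = (x + 1) ^ m := by
  simp_rw [pow_numSin_eq_prod]
  rw [← Fintype.prod_sum (fun (_ : Fin m) (b : Bool) => if b = true then x else 1)]
  simp [Fintype.sum_bool]

lemma chernoff (m κ : ℕ) (hκ1 : 1 ≤ κ) (hκm : κ ≤ m) (σ : ℝ) (hσ : 0 < σ)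
    (hmσ : (m : ℝ) * σ ≤ κ) :
    ∑ ω ∈ Finset.univ.filter (fun ω : Fin m → Bool => κ ≤ numSin m ω), σ ^ numSin m ω
      ≤ (Real.exp 1 * (m : ℝ) * σ / κ) ^ κ := by
  have hm : 0 < m := lt_of_lt_of_le hκ1 hκm
  have hm' : (0:ℝ) < m := by exact_mod_cast hm
  have hκ' : (0:ℝ) < κ := by exact_mod_cast hκ1
  set t : ℝ := κ / ((m:ℝ) * σ) with ht
  have htpos : 0 < t := div_pos hκ' (mul_pos hm' hσ)
  have ht1 : 1 ≤ t := (one_le_div (mul_pos hm' hσ)).2 hmσ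
  have key : ∀ ω : Fin m → Bool, κ ≤ numSin m ω →
      σ ^ numSin m ω ≤ (1/t) ^ κ * (t * σ) ^ numSin m ω := by
    intro ω hω
    have h1 : σ ^ numSin m ω = (1/t) ^ numSin m ω * (t*σ) ^ numSin m ω := by
      rw [← mul_pow]; field_simp
    rw [h1]
    apply mul_le_mul_of_nonneg_right _ (by positivity)
    exact pow_le_pow_of_le_one (by positivity) (by rw [div_le_one htpos]; exact ht1) hω
  calc ∑ ω ∈ Finset.univ.filter (fun ω : Fin m → Bool => κ ≤ numSin m ω), σ ^ numSin m ω
      ≤ ∑ ω ∈ Finset.univ.filter (fun ω : Fin m → Bool => κ ≤ numSin m ω),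
          (1/t) ^ κ * (t * σ) ^ numSin m ω := by
        apply Finset.sum_le_sum; intro ω hω
        exact key ω (Finset.mem_filter.1 hω).2
    _ ≤ ∑ ω : Fin m → Bool, (1/t) ^ κ * (t * σ) ^ numSin m ω := by
        apply Finset.sum_le_sum_of_subset_of_nonneg (Finset.filter_subset _ _)
        intro ω _ _; positivity
    _ = (1/t) ^ κ * (t*σ + 1) ^ m := by rw [← Finset.mul_sum, sum_pow_numSin]
    _ ≤ (1/t) ^ κ * (Real.exp (t*σ)) ^ m := by
        apply mul_le_mul_of_nonneg_left _ (by positivity)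
        apply pow_le_pow_left₀ (by positivity)
        linarith [Real.add_one_le_exp (t*σ)]
    _ = (Real.exp 1 * (m : ℝ) * σ / κ) ^ κ := by
        rw [← Real.exp_nat_mul]
        have hts : (m:ℝ) * (t * σ) = κ := by rw [ht]; field_simp
        rw [hts]
        have he : Real.exp (κ:ℝ) = (Real.exp 1) ^ κ := by
          rw [← Real.exp_nat_mul, mul_one]
        rw [he, ← mul_pow]
        congr 1
        field_simp [ht]
        linarith [hts]

/- ### Auxiliary measure-theoretic lemmas -/

variable {r : ℝ}

lemma uniformIcc_prob (hr : 0 < r) : IsProbabilityMeasure (uniformIcc r) := by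
  constructor
  rw [uniformIcc, Measure.smul_apply, Measure.restrict_apply MeasurableSet.univ,
    Set.univ_inter, Real.volume_Icc, smul_eq_mul]
  rw [show r - -r = 2*r by ring]
  exact ENNReal.inv_mul_cancel (by simp [hr.le]; linarith) ENNReal.ofReal_ne_top

lemma integrable_uniformIcc (hr : 0 < r) {f : ℝ → ℝ} (hf : Continuous f) :
    Integrable f (uniformIcc r) := by
  rw [uniformIcc]
  exact (hf.integrableOn_Icc).smul_measure (by simp [hr.le]; linarith)

lemma integral_uniformIcc (hr : 0 < r) (f : ℝ → ℝ) :
    ∫ x, f x ∂(uniformIcc r) = (2*r)⁻¹ * ∫ x in Set.Icc (-r) r, f x := by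
  rw [uniformIcc, integral_smul_measure, ENNReal.toReal_inv,
    ENNReal.toReal_ofReal (by linarith), smul_eq_mul]

lemma integral_sin_mul_cos_uniformIcc (hr : 0 < r) :
    ∫ x, Real.sin x * Real.cos x ∂(uniformIcc r) = 0 := by
  rw [integral_uniformIcc hr]
  have h1 : ∫ x in Set.Icc (-r) r, Real.sin x * Real.cos x = 0 := by
    rw [MeasureTheory.integral_Icc_eq_integral_Ioc,
      ← intervalIntegral.integral_of_le (by linarith : -r ≤ r)]
    have : ∀ x ∈ Set.uIcc (-r) r, HasDerivAt (fun t => Real.sin t ^ 2 / 2)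
        (Real.sin x * Real.cos x) x := by
      intro x _
      have := ((Real.hasDerivAt_sin x).fun_pow 2).div_const 2
      exact this.congr_deriv (by ring)
    rw [intervalIntegral.integral_eq_sub_of_hasDerivAt this]
    · simp [Real.sin_neg]
    · exact (Real.continuous_sin.mul Real.continuous_cos).intervalIntegrable _ _
  rw [h1, mul_zero]

lemma integral_sin_sq_uniformIcc (hr : 0 < r) :
    ∫ x, Real.sin x * Real.sin x ∂(uniformIcc r) ≤ r ^ 2 / 3 := by
  rw [integral_uniformIcc hr]
  have h1 : ∫ x in Set.Icc (-r) r, Real.sin x * Real.sin x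
      ≤ ∫ x in Set.Icc (-r) r, x ^ 2 := by
    apply setIntegral_mono_on
    · exact (Real.continuous_sin.mul Real.continuous_sin).integrableOn_Icc
    · exact (continuous_pow 2).integrableOn_Icc
    · exact measurableSet_Icc
    · intro x _
      simpa [sq] using Real.sin_sq_le_sq (x := x)
  have h2 : ∫ x in Set.Icc (-r) r, x ^ 2 = 2 * r ^ 3 / 3 := by
    rw [MeasureTheory.integral_Icc_eq_integral_Ioc,
      ← intervalIntegral.integral_of_le (by linarith : -r ≤ r), integral_pow]
    ring
  calc (2*r)⁻¹ * ∫ x in Set.Icc (-r) r, Real.sin x * Real.sin x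
      ≤ (2*r)⁻¹ * (2 * r ^ 3 / 3) := by
        apply mul_le_mul_of_nonneg_left (h1.trans h2.le) (by positivity)
    _ = r ^ 2 / 3 := by field_simp

lemma integral_cos_sq_uniformIcc (hr : 0 < r) :
    ∫ x, Real.cos x * Real.cos x ∂(uniformIcc r) ≤ 1 := by
  haveI := uniformIcc_prob hr
  calc ∫ x, Real.cos x * Real.cos x ∂(uniformIcc r)
      ≤ ∫ _, (1:ℝ) ∂(uniformIcc r) := by
        apply integral_mono (integrable_uniformIcc hr (by continuity)) (integrable_const 1)
        intro x
        show Real.cos x * Real.cos x ≤ 1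
        have := Real.neg_one_le_cos x
        have := Real.cos_le_one x
        nlinarith
    _ = 1 := by simp

lemma integral_pi_prod (hr : 0 < r) (m : ℕ) (f : Fin m → ℝ → ℝ) :
    ∫ α, ∏ i, f i (α i) ∂(Measure.pi fun _ : Fin m => uniformIcc r)
      = ∏ i, ∫ x, f i x ∂(uniformIcc r) := by
  haveI := uniformIcc_prob hr
  letI : MeasureSpace ℝ := ⟨uniformIcc r⟩
  exact MeasureTheory.integral_fintype_prod_eq_prod (ι := Fin m) f

/-- Mean square truncation error for uniformly distributed uncorrelated
parameters: if `α` is uniform on `[−r, r]^m` with `r² ≤ 3κ/m`, then for any coefficients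
`d_ω ∈ [−1,1]`, `E[(Σ_{#sin(ω) ≥ κ} Φ_ω(α) d_ω)²] ≤ (e m r²/(3κ))^κ`. -/
theorem mse_truncation_uniform (m κ : ℕ) (hκ1 : 1 ≤ κ) (hκm : κ ≤ m)
    (r : ℝ) (hr : 0 < r) (hr2 : r ^ 2 ≤ 3 * (κ : ℝ) / (m : ℝ))
    (d : (Fin m → Bool) → ℝ) (hd : ∀ ω, |d ω| ≤ 1) :
    ∫ α, (∑ ω ∈ Finset.univ.filter (fun ω => κ ≤ numSin m ω),
          pathCoeff m ω α * d ω) ^ 2 ∂(Measure.pi fun _ : Fin m => uniformIcc r)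
      ≤ (Real.exp 1 * (m : ℝ) * r ^ 2 / (3 * (κ : ℝ))) ^ κ := by
  haveI := uniformIcc_prob hr
  set μ := Measure.pi fun _ : Fin m => uniformIcc r with hμ
  set S := Finset.univ.filter (fun ω : Fin m → Bool => κ ≤ numSin m ω) with hS
  haveI : IsProbabilityMeasure μ := by rw [hμ]; infer_instance
  -- continuity and boundedness of path coefficients
  have hcont : ∀ ω : Fin m → Bool, Continuous (pathCoeff m ω) := by
    intro ω
    apply continuous_finset_prod
    intro i _
    cases h : ω i <;> simp only [h, Bool.false_eq_true, if_false, if_true] <;> fun_prop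
  have hbdd : ∀ (ω : Fin m → Bool) (α : Fin m → ℝ), |pathCoeff m ω α| ≤ 1 := by
    intro ω α
    rw [pathCoeff, Finset.abs_prod]
    apply Finset.prod_le_one (fun i _ => abs_nonneg _)
    intro i _
    cases h : ω i <;>
      simp [h, Real.abs_cos_le_one, Real.abs_sin_le_one]
  have hint1 : ∀ g : (Fin m → ℝ) → ℝ, Continuous g → (∀ x, |g x| ≤ 1) → Integrable g μ := by
    intro g hg hb
    exact (integrable_const (1:ℝ)).mono' hg.aestronglyMeasurable
      (Filter.Eventually.of_forall fun x => by simpa using hb x)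
  have hint : ∀ ω ω' : Fin m → Bool,
      Integrable (fun α => (d ω * d ω') * (pathCoeff m ω α * pathCoeff m ω' α)) μ := by
    intro ω ω'
    apply hint1 _ (by fun_prop)
    intro x
    rw [abs_mul, abs_mul, abs_mul]
    have h1 := hd ω; have h2 := hd ω'; have h3 := hbdd ω x; have h4 := hbdd ω' x
    have a : |d ω| * |d ω'| ≤ 1 := by nlinarith [abs_nonneg (d ω), abs_nonneg (d ω')]
    have b : |pathCoeff m ω x| * |pathCoeff m ω' x| ≤ 1 := by
      nlinarith [abs_nonneg (pathCoeff m ω x), abs_nonneg (pathCoeff m ω' x)]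
    nlinarith [mul_nonneg (abs_nonneg (d ω)) (abs_nonneg (d ω')),
      mul_nonneg (abs_nonneg (pathCoeff m ω x)) (abs_nonneg (pathCoeff m ω' x))]
  -- expand the square
  have expand : ∀ α : Fin m → ℝ, (∑ ω ∈ S, pathCoeff m ω α * d ω) ^ 2
      = ∑ ω ∈ S, ∑ ω' ∈ S, (d ω * d ω') * (pathCoeff m ω α * pathCoeff m ω' α) := by
    intro α
    rw [sq, Finset.sum_mul_sum]
    exact Finset.sum_congr rfl fun ω _ => Finset.sum_congr rfl fun ω' _ => by ring
  have step1 : ∫ α, (∑ ω ∈ S, pathCoeff m ω α * d ω) ^ 2 ∂μ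
      = ∑ ω ∈ S, ∑ ω' ∈ S, (d ω * d ω') * ∫ α, pathCoeff m ω α * pathCoeff m ω' α ∂μ := by
    simp_rw [expand]
    rw [integral_finset_sum _ (fun ω _ => integrable_finset_sum _ (fun ω' _ => hint ω ω'))]
    refine Finset.sum_congr rfl fun ω _ => ?_
    rw [integral_finset_sum _ (fun ω' _ => hint ω ω')]
    exact Finset.sum_congr rfl fun ω' _ => integral_const_mul _ _
  -- factorization of product integrals
  have hfact : ∀ ω ω' : Fin m → Bool, ∫ α, pathCoeff m ω α * pathCoeff m ω' α ∂μ
      = ∏ i, ∫ x, (if ω i then Real.sin x else Real.cos x) *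
          (if ω' i then Real.sin x else Real.cos x) ∂(uniformIcc r) := by
    intro ω ω'
    rw [hμ, ← integral_pi_prod hr m]
    congr 1
    funext α
    rw [pathCoeff, pathCoeff, ← Finset.prod_mul_distrib]
  -- off-diagonal terms vanish
  have hoff : ∀ ω ω' : Fin m → Bool, ω ≠ ω' →
      ∫ α, pathCoeff m ω α * pathCoeff m ω' α ∂μ = 0 := by
    intro ω ω' hne
    rw [hfact]
    obtain ⟨i, hi⟩ : ∃ i, ω i ≠ ω' i := by
      by_contra h; push_neg at h; exact hne (funext h)
    apply Finset.prod_eq_zero (Finset.mem_univ i)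
    cases h1 : ω i <;> cases h2 : ω' i
    · exact absurd (h1.trans h2.symm) hi
    · simp only [h1, h2, Bool.false_eq_true, if_false, if_true]
      have hc : (fun x => Real.cos x * Real.sin x) = fun x => Real.sin x * Real.cos x := by
        funext x; ring
      rw [hc]
      exact integral_sin_mul_cos_uniformIcc hr
    · simp only [h1, h2, Bool.false_eq_true, if_false, if_true]
      exact integral_sin_mul_cos_uniformIcc hr
    · exact absurd (h1.trans h2.symm) hi
  -- collapse the double sum
  have step2 : ∑ ω ∈ S, ∑ ω' ∈ S, (d ω * d ω') * ∫ α, pathCoeff m ω α * pathCoeff m ω' α ∂μ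
      = ∑ ω ∈ S, (d ω * d ω) * ∫ α, pathCoeff m ω α * pathCoeff m ω α ∂μ := by
    refine Finset.sum_congr rfl fun ω hω => ?_
    refine Finset.sum_eq_single_of_mem ω hω fun ω' _ h' => ?_
    rw [hoff ω ω' (Ne.symm h'), mul_zero]
  -- bound the diagonal terms
  have hdiag : ∀ ω ∈ S, (d ω * d ω) * ∫ α, pathCoeff m ω α * pathCoeff m ω α ∂μ
      ≤ (r ^ 2 / 3) ^ numSin m ω := by
    intro ω _
    have hnn : ∀ i : Fin m, (0:ℝ) ≤ ∫ x, (if ω i then Real.sin x else Real.cos x) *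
        (if ω i then Real.sin x else Real.cos x) ∂(uniformIcc r) :=
      fun i => integral_nonneg fun x => mul_self_nonneg _
    have hIle : ∫ α, pathCoeff m ω α * pathCoeff m ω α ∂μ ≤ (r ^ 2 / 3) ^ numSin m ω := by
      rw [hfact ω ω, pow_numSin_eq_prod]
      apply Finset.prod_le_prod (fun i _ => hnn i)
      intro i _
      cases h : ω i
      · simp only [h, Bool.false_eq_true, if_false]
        exact integral_cos_sq_uniformIcc hr
      · simp only [h, if_true]
        exact integral_sin_sq_uniformIcc hr
    have hI0 : (0:ℝ) ≤ ∫ α, pathCoeff m ω α * pathCoeff m ω α ∂μ :=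
      integral_nonneg fun α => mul_self_nonneg _
    have hd2 : d ω * d ω ≤ 1 := by
      have h1 := hd ω
      have h2 := abs_nonneg (d ω)
      nlinarith [sq_abs (d ω)]
    calc (d ω * d ω) * ∫ α, pathCoeff m ω α * pathCoeff m ω α ∂μ
        ≤ 1 * ∫ α, pathCoeff m ω α * pathCoeff m ω α ∂μ :=
          mul_le_mul_of_nonneg_right hd2 hI0
      _ = ∫ α, pathCoeff m ω α * pathCoeff m ω α ∂μ := one_mul _
      _ ≤ (r ^ 2 / 3) ^ numSin m ω := hIle
  -- final bound via Chernoff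
  have hm' : (0:ℝ) < m := by
    have : 0 < m := lt_of_lt_of_le hκ1 hκm
    exact_mod_cast this
  have hmσ : (m : ℝ) * (r ^ 2 / 3) ≤ κ := by
    rw [le_div_iff₀ hm'] at hr2
    nlinarith
  calc ∫ α, (∑ ω ∈ S, pathCoeff m ω α * d ω) ^ 2 ∂μ
      = ∑ ω ∈ S, ∑ ω' ∈ S, (d ω * d ω') * ∫ α, pathCoeff m ω α * pathCoeff m ω' α ∂μ := step1
    _ = ∑ ω ∈ S, (d ω * d ω) * ∫ α, pathCoeff m ω α * pathCoeff m ω α ∂μ := step2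
    _ ≤ ∑ ω ∈ S, (r ^ 2 / 3) ^ numSin m ω := Finset.sum_le_sum hdiag
    _ ≤ (Real.exp 1 * (m : ℝ) * (r ^ 2 / 3) / κ) ^ κ :=
        chernoff m κ hκ1 hκm _ (by positivity) hmσ
    _ = (Real.exp 1 * (m : ℝ) * r ^ 2 / (3 * (κ : ℝ))) ^ κ := by
        congr 1
        ring
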